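/- Let q ∈ (0, 1/2), L > 0, ℓ < u, let K ≥ 3 be an integer, and let S be an integer with S ≥ max{4, log₂(L·(u−ℓ)/(√2·q²·(1−2q)·(1−√2·q)))}. Set K_1 = K − 2 and K_s = 1 for s = 2,…,S, so that r_s = Σ_{t=2}^{s} K_t = s − 1 with r_1 = 0. Then the greedy multiscale expected error bound is at most the single-scale projected gradient descent expected error bound: q^{K−2}·√(2^{S+1})·(q^{S−1} + (L·(u−ℓ)/2^{S+2})·Σ_{s=1}^{S−1} 2^s·q^{s−1}) ≤ q^K·√(2^S + 2). -/

import Mathlib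

open Finset

/-- Sufficient conditions for greedy multiscale (one iteration per coarse scale, `K−2` at the
finest) to have an expected error bound at most that of `K` iterations of single-scale
projected gradient descent. -/
theorem greedy_multiscale_better
    (q L l u : ℝ) (hq0 : 0 < q) (hq : q < 1 / 2) (hL : 0 < L) (hlu : l < u)
    (K S : ℕ) (hK : 3 ≤ K) (hS4 : 4 ≤ S)
    (hSlog : Real.logb 2
        (L * (u - l) / (Real.sqrt 2 * q ^ 2 * (1 - 2 * q) * (1 - Real.sqrt 2 * q))) ≤ (S : ℝ)) :
    q ^ (K - 2) * Real.sqrt ((2 : ℝ) ^ (S + 1)) *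
        (q ^ (S - 1) +
          L * (u - l) / 2 ^ (S + 2) *
            ∑ s ∈ Finset.Icc 1 (S - 1), (2 : ℝ) ^ s * q ^ (s - 1)) ≤
      q ^ K * Real.sqrt ((2 : ℝ) ^ S + 2) := by
  set s2 := Real.sqrt 2 with hs2def
  have hs2sq : s2 ^ 2 = 2 := Real.sq_sqrt (by norm_num)
  have hs2nonneg : 0 ≤ s2 := Real.sqrt_nonneg 2
  have hs2pos : 0 < s2 := by nlinarith
  have hs2lt2 : s2 < 2 := by nlinarith
  have h2q : 0 < 1 - 2 * q := by linarith
  have hs2q : 0 < 1 - s2 * q := by nlinarith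
  have hA : 0 < L * (u - l) := by nlinarith
  set A := L * (u - l) with hAdef
  set D := s2 * q ^ 2 * (1 - 2 * q) * (1 - s2 * q) with hDdef
  have hD : 0 < D := by positivity
  have hT : 0 < (2 : ℝ) ^ S := by positivity
  set T := (2 : ℝ) ^ S with hTdef
  -- from the log condition: A ≤ T * D
  have hAD : A ≤ T * D := by
    have hx : 0 < A / D := div_pos hA hD
    have := (Real.logb_le_iff_le_rpow (by norm_num : (1:ℝ) < 2) hx).mp hSlog
    rw [Real.rpow_natCast] at this
    rw [div_le_iff₀ hD] at this
    linarith [this]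
  -- bound on the geometric sum
  have hsum : ∑ s ∈ Finset.Icc 1 (S - 1), (2 : ℝ) ^ s * q ^ (s - 1) ≤ 2 / (1 - 2 * q) := by
    have hIcc : Finset.Icc 1 (S - 1) = Finset.Ico 1 S := by
      rw [← Finset.Ico_add_one_right_eq_Icc, Nat.sub_add_cancel (by omega)]
    rw [hIcc, Finset.sum_Ico_eq_sum_range]
    have hterm : ∀ i ∈ Finset.range (S - 1), (2 : ℝ) ^ (1 + i) * q ^ (1 + i - 1)
        = 2 * (2 * q) ^ i := by
      intro i _
      have : 1 + i - 1 = i := by omega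
      rw [this, pow_add, pow_one, mul_pow, mul_assoc]
    rw [Finset.sum_congr rfl hterm, ← Finset.mul_sum]
    have hgeom : ∑ i ∈ Finset.range (S - 1), (2 * q) ^ i ≤ 1 / (1 - 2 * q) := by
      have hne : (2 * q : ℝ) ≠ 1 := by linarith
      rw [geom_sum_eq hne]
      have hne2 : (2 * q - 1 : ℝ) ≠ 0 := by linarith
      have hne3 : (1 - 2 * q : ℝ) ≠ 0 := by linarith
      have heq : ((2 * q) ^ (S - 1) - 1) / (2 * q - 1)
          = (1 - (2 * q) ^ (S - 1)) / (1 - 2 * q) := by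
        field_simp
        ring
      rw [heq]
      have hpow : 0 ≤ (2 * q) ^ (S - 1) := by positivity
      gcongr
      linarith
    calc 2 * ∑ i ∈ Finset.range (S - 1), (2 * q) ^ i ≤ 2 * (1 / (1 - 2 * q)) := by linarith
      _ = 2 / (1 - 2 * q) := by ring
  -- key scalar inequality
  have hq1 : q ^ (S - 1) ≤ q ^ 3 := by
    apply pow_le_pow_of_le_one (le_of_lt hq0) (by linarith) (by omega)
  have hkey : s2 * (q ^ (S - 1) + A / 2 ^ (S + 2) * (2 / (1 - 2 * q))) ≤ q ^ 2 := by
    have h1 : s2 * q ^ (S - 1) ≤ s2 * q ^ 3 := by nlinarith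
    have hB : (0:ℝ) < 2 ^ (S + 2) * (1 - 2 * q) := by positivity
    have h2 : s2 * (A / 2 ^ (S + 2) * (2 / (1 - 2 * q))) ≤ q ^ 2 - s2 * q ^ 3 := by
      have heq : s2 * (A / 2 ^ (S + 2) * (2 / (1 - 2 * q)))
          = (s2 * A * 2) / (2 ^ (S + 2) * (1 - 2 * q)) := by
        field_simp
      rw [heq, div_le_iff₀ hB]
      have hpow : (2:ℝ) ^ (S + 2) = 4 * T := by rw [hTdef, pow_add]; ring
      rw [hpow]
      have hmul : s2 * A * 2 ≤ s2 * (T * D) * 2 := by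
        nlinarith [mul_le_mul_of_nonneg_left hAD hs2nonneg]
      have heq2 : s2 * (T * D) * 2 = (q ^ 2 - s2 * q ^ 3) * (4 * T * (1 - 2 * q)) := by
        rw [hDdef]
        linear_combination (2 * T * q ^ 2 * (1 - 2 * q) * (1 - s2 * q)) * hs2sq
      linarith
    rw [mul_add]
    linarith
  -- assemble
  have hsqrt : Real.sqrt ((2 : ℝ) ^ (S + 1)) = s2 * Real.sqrt T := by
    rw [hTdef, pow_add, pow_one, mul_comm ((2:ℝ)^S) 2, Real.sqrt_mul (by norm_num : (0:ℝ) ≤ 2)]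
  have hsT : 0 ≤ Real.sqrt T := Real.sqrt_nonneg T
  have hqK2 : 0 ≤ q ^ (K - 2) := by positivity
  have hX : q ^ (S - 1) + A / 2 ^ (S + 2) * ∑ s ∈ Finset.Icc 1 (S - 1), (2 : ℝ) ^ s * q ^ (s - 1)
      ≤ q ^ (S - 1) + A / 2 ^ (S + 2) * (2 / (1 - 2 * q)) := by
    have h0 : 0 ≤ A / 2 ^ (S + 2) := by positivity
    linarith [mul_le_mul_of_nonneg_left hsum h0]
  have hXpos : 0 ≤ q ^ (S - 1) + A / 2 ^ (S + 2) *
      ∑ s ∈ Finset.Icc 1 (S - 1), (2 : ℝ) ^ s * q ^ (s - 1) := by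
    have : ∀ s ∈ Finset.Icc 1 (S - 1), (0:ℝ) ≤ (2 : ℝ) ^ s * q ^ (s - 1) := by
      intro s _; positivity
    have := Finset.sum_nonneg this
    positivity
  have hfin : q ^ (K - 2) * Real.sqrt ((2 : ℝ) ^ (S + 1)) *
        (q ^ (S - 1) + A / 2 ^ (S + 2) *
          ∑ s ∈ Finset.Icc 1 (S - 1), (2 : ℝ) ^ s * q ^ (s - 1))
      ≤ q ^ (K - 2) * Real.sqrt T * q ^ 2 := by
    rw [hsqrt]
    calc q ^ (K - 2) * (s2 * Real.sqrt T) *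
          (q ^ (S - 1) + A / 2 ^ (S + 2) *
            ∑ s ∈ Finset.Icc 1 (S - 1), (2 : ℝ) ^ s * q ^ (s - 1))
        ≤ q ^ (K - 2) * (s2 * Real.sqrt T) *
          (q ^ (S - 1) + A / 2 ^ (S + 2) * (2 / (1 - 2 * q))) := by
          apply mul_le_mul_of_nonneg_left hX; positivity
      _ = q ^ (K - 2) * Real.sqrt T *
          (s2 * (q ^ (S - 1) + A / 2 ^ (S + 2) * (2 / (1 - 2 * q)))) := by ring
      _ ≤ q ^ (K - 2) * Real.sqrt T * q ^ 2 := by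
          apply mul_le_mul_of_nonneg_left hkey; positivity
  have hqK : q ^ (K - 2) * q ^ 2 = q ^ K := by
    rw [← pow_add, Nat.sub_add_cancel (by omega)]
  have hlast : Real.sqrt T ≤ Real.sqrt (T + 2) :=
    Real.sqrt_le_sqrt (by linarith)
  calc q ^ (K - 2) * Real.sqrt ((2 : ℝ) ^ (S + 1)) *
        (q ^ (S - 1) + A / 2 ^ (S + 2) *
          ∑ s ∈ Finset.Icc 1 (S - 1), (2 : ℝ) ^ s * q ^ (s - 1))
      ≤ q ^ (K - 2) * Real.sqrt T * q ^ 2 := hfin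
    _ = q ^ K * Real.sqrt T := by rw [← hqK]; ring
    _ ≤ q ^ K * Real.sqrt (T + 2) := by
        apply mul_le_mul_of_nonneg_left hlast; positivity
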